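/- Fix a real ε with 0 < ε < 1 and integers m ≥ 2, n ≥ 1. Set d = ⌈2·(log₂ m)/ε⌉, s = 2·d²·n, and k = ⌈ε·d⌉. Then for every set T ⊆ Fin s with |T| ≤ d·n, the number of functions g : Fin d → Fin s such that |{i : Fin d | g i ∈ T}| ≥ k is at most s^d / m². -/

import Mathlib

theorem stmt_8 (ε : ℝ) (hε0 : 0 < ε) (hε1 : ε < 1) (m n : ℕ) (hm : 2 ≤ m) (hn : 1 ≤ n)
    (d s k : ℕ) (hd : d = ⌈2 * Real.logb 2 m / ε⌉₊) (hs : s = 2 * d ^ 2 * n)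
    (hk : k = ⌈ε * d⌉₊)
    (T : Finset (Fin s)) (hT : T.card ≤ d * n) :
    (({g : Fin d → Fin s |
        k ≤ (Finset.univ.filter (fun i : Fin d => g i ∈ T)).card}).ncard : ℝ)
      ≤ (s : ℝ) ^ d / (m : ℝ) ^ 2 := by
  have hlogb : (0:ℝ) < Real.logb 2 m := by
    apply Real.logb_pos (by norm_num)
    exact_mod_cast lt_of_lt_of_le one_lt_two hm
  have hd1 : 1 ≤ d := by
    rw [hd]
    apply Nat.one_le_ceil_iff.mpr
    positivity
  have hkd : k ≤ d := by
    rw [hk]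
    apply Nat.ceil_le.mpr
    nlinarith [show (0:ℝ) ≤ (d:ℝ) from Nat.cast_nonneg d]
  have hεdk : ε * d ≤ (k : ℝ) := by rw [hk]; exact Nat.le_ceil _
  have hεd2 : 2 * Real.logb 2 m ≤ ε * d := by
    have := Nat.le_ceil (2 * Real.logb 2 m / ε)
    rw [← hd] at this
    rw [div_le_iff₀ hε0] at this
    linarith
  -- m^2 ≤ 2^k
  have hm2k : (m : ℝ) ^ 2 ≤ (2 : ℝ) ^ k := by
    have hmpos : (0:ℝ) < m := by positivity
    have h1 : (m:ℝ) ^ 2 = (2:ℝ) ^ (2 * Real.logb 2 m) := by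
      rw [mul_comm, Real.rpow_mul (by norm_num), Real.rpow_logb (by norm_num) (by norm_num) hmpos]
      norm_num [Real.rpow_natCast]
    rw [h1, ← Real.rpow_natCast 2 k]
    apply Real.rpow_le_rpow_left_iff (by norm_num : (1:ℝ) < 2) |>.mpr
    linarith
  -- counting
  set A : Finset (Fin d → Fin s) :=
    Finset.univ.filter (fun g => k ≤ (Finset.univ.filter (fun i : Fin d => g i ∈ T)).card) with hA
  have hset : {g : Fin d → Fin s |
      k ≤ (Finset.univ.filter (fun i : Fin d => g i ∈ T)).card} = ↑A := by
    ext g; simp [hA]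
  rw [hset, Set.ncard_coe_finset]
  have hsub : A ⊆ (Finset.powersetCard k (Finset.univ : Finset (Fin d))).biUnion
      (fun S => Fintype.piFinset (fun i => if i ∈ S then T else Finset.univ)) := by
    intro g hg
    rw [hA, Finset.mem_filter] at hg
    obtain ⟨S, hS, hScard⟩ := Finset.exists_subset_card_eq hg.2
    rw [Finset.mem_biUnion]
    refine ⟨S, ?_, ?_⟩
    · rw [Finset.mem_powersetCard]; exact ⟨Finset.subset_univ _, hScard⟩
    · rw [Fintype.mem_piFinset]
      intro i
      by_cases hi : i ∈ S
      · simp only [hi, if_true]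
        have := hS hi
        rw [Finset.mem_filter] at this
        exact this.2
      · simp [hi]
  have hcardB : ∀ S ∈ Finset.powersetCard k (Finset.univ : Finset (Fin d)),
      (Fintype.piFinset (fun i => if i ∈ S then T else Finset.univ)).card
        = T.card ^ k * s ^ (d - k) := by
    intro S hS
    rw [Finset.mem_powersetCard] at hS
    rw [Fintype.card_piFinset]
    have : ∀ i : Fin d, (if i ∈ S then T else Finset.univ).card
        = if i ∈ S then T.card else s := by
      intro i; split <;> simp
    simp only [this]
    rw [← Finset.prod_filter_mul_prod_filter_not Finset.univ (· ∈ S)]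
    have e1 : Finset.filter (· ∈ S) Finset.univ = S := by simp
    have e2 : Finset.filter (fun x => ¬ x ∈ S) Finset.univ = Sᶜ := by
      ext x; simp [Finset.mem_compl]
    have p1 : ∏ x ∈ Finset.filter (· ∈ S) Finset.univ, (if x ∈ S then T.card else s)
        = T.card ^ k := by
      rw [e1, Finset.prod_congr rfl (fun x hx => if_pos hx), Finset.prod_const, hS.2]
    have p2 : ∏ x ∈ Finset.filter (fun x => ¬ x ∈ S) Finset.univ,
        (if x ∈ S then T.card else s) = s ^ (d - k) := by
      rw [e2, Finset.prod_congr rfl (fun x hx => if_neg (Finset.mem_compl.mp hx)),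
        Finset.prod_const, Finset.card_compl, hS.2, Fintype.card_fin]
    rw [p1, p2]
  have hbound : A.card ≤ d.choose k * (T.card ^ k * s ^ (d - k)) := by
    calc A.card ≤ _ := Finset.card_le_card hsub
      _ ≤ ∑ S ∈ Finset.powersetCard k (Finset.univ : Finset (Fin d)),
            (Fintype.piFinset (fun i => if i ∈ S then T else Finset.univ)).card :=
        Finset.card_biUnion_le
      _ = ∑ S ∈ Finset.powersetCard k (Finset.univ : Finset (Fin d)),
            T.card ^ k * s ^ (d - k) := Finset.sum_congr rfl hcardB
      _ = d.choose k * (T.card ^ k * s ^ (d - k)) := by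
        rw [Finset.sum_const, Finset.card_powersetCard, Finset.card_univ,
          Fintype.card_fin, smul_eq_mul]
  -- now real arithmetic
  have hsR : (0:ℝ) < s := by
    have : 0 < s := by rw [hs]; positivity
    exact_mod_cast this
  have h2 : (A.card : ℝ) ≤ (d:ℝ)^k * ((d*n : ℕ):ℝ)^k * (s:ℝ)^(d-k) := by
    calc (A.card : ℝ) ≤ (d.choose k : ℝ) * ((T.card:ℝ) ^ k * (s:ℝ) ^ (d - k)) := by
          exact_mod_cast hbound
      _ ≤ (d:ℝ)^k * ((d*n : ℕ):ℝ)^k * (s:ℝ)^(d-k) := by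
          rw [mul_assoc]
          apply mul_le_mul
          · exact_mod_cast Nat.choose_le_pow d k
          · apply mul_le_mul_of_nonneg_right _ (by positivity)
            apply pow_le_pow_left₀ (by positivity)
            exact_mod_cast hT
          · positivity
          · positivity
  have h3 : (d:ℝ)^k * ((d*n : ℕ):ℝ)^k * (s:ℝ)^(d-k) = (s:ℝ)^d / 2^k := by
    have hsd : (s:ℝ) = 2 * (d:ℝ)^2 * n := by rw [hs]; push_cast; ring
    rw [eq_div_iff (by positivity : (2:ℝ)^k ≠ 0)]
    push_cast
    rw [show (s:ℝ)^d = (s:ℝ)^k * (s:ℝ)^(d-k) by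
      rw [← pow_add]; congr 1; omega]
    rw [hsd, mul_pow, mul_pow]
    ring
  calc (A.card : ℝ) ≤ (s:ℝ)^d / 2^k := by rw [← h3]; exact h2
    _ ≤ (s:ℝ)^d / (m:ℝ)^2 := by
      apply div_le_div_of_nonneg_left (by positivity) (by positivity) hm2k
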